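/- Let w be an element of S_Z, let A be a subset of Inv(w), and let n be a positive integer. Then the set RF^+_n(w,A) of decreasing primed reduced factorizations of w into at most n factors with marked-inversion set A is nonempty if and only if c_i(w^{-1}) <= n for every integer i, where c_i(v) := |{ j in Z : i < j and v(i) > v(j) }| is the Lehmer code of v. -/

import Mathlib

open MvPolynomial

/-! ### Permutations of ℤ, reduced words -/

/-- The simple transposition `s_i = (i, i+1)` of `ℤ`. -/
def sT (i : ℤ) : Equiv.Perm ℤ := Equiv.swap i (i + 1)

/-- The product `s_{i_1} s_{i_2} ⋯ s_{i_l}` of the simple transpositions indexed by a word. -/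
def wordProd (l : List ℤ) : Equiv.Perm ℤ := (l.map sT).prod

/-- `S_ℤ`: the subgroup of permutations of `ℤ` generated by the simple transpositions. -/
def SZSet : Set (Equiv.Perm ℤ) := {w | ∃ l : List ℤ, wordProd l = w}

/-- `S_∞`: the subgroup generated by `s_i` for `i ≥ 1`. -/
def SinftySet : Set (Equiv.Perm ℤ) :=
  {w | ∃ l : List ℤ, (∀ i ∈ l, 1 ≤ i) ∧ wordProd l = w}

/-- `S_n`: the subgroup generated by `s_i` for `1 ≤ i ≤ n-1`. -/
def SnSet (n : ℕ) : Set (Equiv.Perm ℤ) :=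
  {w | ∃ l : List ℤ, (∀ i ∈ l, 1 ≤ i ∧ i < n) ∧ wordProd l = w}

/-- A reduced word for `w`: a minimal length word whose product is `w`. -/
def IsReducedWord (w : Equiv.Perm ℤ) (l : List ℤ) : Prop :=
  wordProd l = w ∧ ∀ m : List ℤ, wordProd m = w → l.length ≤ m.length

/-- The Coxeter length of `w` (the length of any reduced word for `w`). -/
noncomputable def lenOf (w : Equiv.Perm ℤ) : ℕ :=
  sInf {m | ∃ l : List ℤ, wordProd l = w ∧ l.length = m}

/-- The inversion set `Inv(w) = {(a,b) : a < b, w(a) > w(b)}`. -/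
def InvSet (w : Equiv.Perm ℤ) : Set (ℤ × ℤ) := {p | p.1 < p.2 ∧ w p.2 < w p.1}

/-- The Lehmer code `c_i(w) = #{j : i < j, w(i) > w(j)}`. -/
noncomputable def codeOf (w : Equiv.Perm ℤ) (i : ℤ) : ℕ := {j : ℤ | i < j ∧ w j < w i}.ncard

/-- The Rothe diagram `D(w) = {(i, w(j)) : i < j, w(i) > w(j)}`. -/
def RotheD (w : Equiv.Perm ℤ) : Set (ℤ × ℤ) :=
  {p | ∃ j : ℤ, p.1 < j ∧ w j < w p.1 ∧ p.2 = w j}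

/-! ### Primed letters and primed words -/

/-- A primed letter: `(x, false)` denotes the integer `x`, `(x, true)` denotes `x' = x - 1/2`. -/
abbrev PLetter := ℤ × Bool

/-- Twice the value of a primed letter (so that comparisons agree with `1' < 1 < 2' < 2 < ⋯`). -/
def pval (p : PLetter) : ℤ := 2 * p.1 - (if p.2 then 1 else 0)

/-- A strictly decreasing primed word. -/
def PDec (l : List PLetter) : Prop := l.Pairwise (fun p q => pval q < pval p)

/-- A strictly decreasing integer word. -/
def ZDec (l : List ℤ) : Prop := l.Pairwise (fun x y => y < x)

/-- Remove the primes from a primed word (the "ceiling"). -/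
def unprimeW (l : List PLetter) : List ℤ := l.map Prod.fst

/-- Membership in `R⁺(w)`: a primed word whose unprimed form is a reduced word for `w`. -/
def IsPrimedReducedWord (w : Equiv.Perm ℤ) (l : List PLetter) : Prop :=
  IsReducedWord w (unprimeW l)

/-- The set `Marked(i)` of marked inversions of a primed word. -/
def markedSet (l : List PLetter) : Set (ℤ × ℤ) :=
  {p | ∃ j : Fin l.length, (l.get j).2 = true ∧
        p.1 = wordProd ((l.drop ((j : ℕ) + 1)).reverse.map Prod.fst) (l.get j).1 ∧
        p.2 = wordProd ((l.drop ((j : ℕ) + 1)).reverse.map Prod.fst) ((l.get j).1 + 1)}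

/-! ### Factorizations (as sequences of factors) -/

/-- The concatenation of the first `N` factors of a factorization. -/
def concatP (a : ℕ → List PLetter) (N : ℕ) : List PLetter := ((List.range N).map a).flatten

/-- The concatenation of the first `N` factors of an unprimed factorization. -/
def concatZ (a : ℕ → List ℤ) (N : ℕ) : List ℤ := ((List.range N).map a).flatten

/-- `RF⁺(w, A)`: decreasing primed reduced factorizations of `w` with marked set `A`
(all but finitely many factors empty). -/
def RFplus (w : Equiv.Perm ℤ) (A : Set (ℤ × ℤ)) : Set (ℕ → List PLetter) :=
  {a | (∀ i, PDec (a i)) ∧ ∃ N : ℕ, (∀ m, N ≤ m → a m = []) ∧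
        IsPrimedReducedWord w (concatP a N) ∧ markedSet (concatP a N) = A}

/-- `RF⁺_n(w, A)`: elements of `RF⁺(w, A)` with all factors beyond the first `n` empty. -/
def RFplusN (n : ℕ) (w : Equiv.Perm ℤ) (A : Set (ℤ × ℤ)) : Set (ℕ → List PLetter) :=
  {a | (∀ i, PDec (a i)) ∧ (∀ m, n ≤ m → a m = []) ∧
        IsPrimedReducedWord w (concatP a n) ∧ markedSet (concatP a n) = A}

/-- `RF_n(w)`: unprimed decreasing reduced factorizations of `w` into at most `n` factors. -/
def RFZn (n : ℕ) (w : Equiv.Perm ℤ) : Set (ℕ → List ℤ) :=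
  {a | (∀ i, ZDec (a i)) ∧ (∀ m, n ≤ m → a m = []) ∧ IsReducedWord w (concatZ a n)}

/-- Removing the primes from each factor of a primed factorization. -/
def unprimeF (a : ℕ → List PLetter) : ℕ → List ℤ := fun m => unprimeW (a m)

/-! ### The pairing procedure and crystal operators (primed version) -/

/-- Find the first letter `b` in the (decreasing) list with `⌈b⌉ < c`, removing it. -/
def findPairP (c : ℤ) : List PLetter → Option PLetter × List PLetter
  | [] => (none, [])
  | b :: rest =>
      if b.1 < c then (some b, rest)
      else
        let r := findPairP c rest
        (r.1, b :: r.2)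

/-- Iterate the pairing over the letters of `v` from right to left. -/
def pairFoldP (u : List PLetter) (vrev : List PLetter) :
    List (PLetter × PLetter) × List PLetter :=
  vrev.foldl (fun st c =>
    match findPairP c.1 st.2 with
    | (none, r) => (st.1, r)
    | (some b, r) => ((b, c) :: st.1, r)) ([], u)

/-- The set `pair(u, v)` of paired letters, as a list of pairs. -/
def pairsP (u v : List PLetter) : List (PLetter × PLetter) := (pairFoldP u v.reverse).1

/-- The unpaired letters of `v` (in decreasing order). -/
def unpairedSnd (u v : List PLetter) : List PLetter :=
  v.filter fun c => decide (c ∉ (pairsP u v).map Prod.snd)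

/-- The unpaired letters of `u` (in decreasing order). -/
def unpairedFst (u v : List PLetter) : List PLetter :=
  u.filter fun b => decide (b ∉ (pairsP u v).map Prod.fst)

theorem exists_add_not_mem (L : List ℤ) (x : ℤ) : ∃ q : ℕ, x + q ∉ L := by
  have h : ∃ q : ℕ, ∀ y ∈ L, y < x + q := by
    induction L with
    | nil => exact ⟨1, by simp⟩
    | cons a t ih =>
      obtain ⟨q, hq⟩ := ih
      refine ⟨q + (a - x).toNat + 1, ?_⟩
      intro y hy
      rcases List.mem_cons.mp hy with rfl | h
      · push_cast; omega
      · have := hq y h; push_cast; omega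
  obtain ⟨q, hq⟩ := h
  exact ⟨q, fun hmem => lt_irrefl _ (hq _ hmem)⟩

theorem exists_sub_not_mem (L : List ℤ) (x : ℤ) : ∃ q : ℕ, x - q ∉ L := by
  have h : ∃ q : ℕ, ∀ y ∈ L, x - q < y := by
    induction L with
    | nil => exact ⟨1, by simp⟩
    | cons a t ih =>
      obtain ⟨q, hq⟩ := ih
      refine ⟨q + (x - a).toNat + 1, ?_⟩
      intro y hy
      rcases List.mem_cons.mp hy with rfl | h
      · push_cast; omega
      · have := hq y h; push_cast; omega
  obtain ⟨q, hq⟩ := h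
  exact ⟨q, fun hmem => lt_irrefl _ (hq _ hmem)⟩

/-- The minimal `q ∈ ℕ` with `x + q ∉ L`. -/
def qUp (L : List ℤ) (x : ℤ) : ℕ := Nat.find (exists_add_not_mem L x)

/-- The minimal `q ∈ ℕ` with `x - q ∉ L`. -/
def qDown (L : List ℤ) (x : ℤ) : ℕ := Nat.find (exists_sub_not_mem L x)

/-- Reverse the prime on a primed letter. -/
def toggleP (p : PLetter) : PLetter := (p.1, !p.2)

/-- Toggle the prime on the occurrence of the letter `p` in a primed word. -/
def toggleIn (l : List PLetter) (p : PLetter) : List PLetter :=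
  l.map fun q => if q = p then toggleP q else q

/-- Swap the primes on a pair `(b, c)` with `b` in the first word and `c` in the second:
reverse both primes when exactly one of the two letters is primed. -/
def swapPairIn (uv : List PLetter × List PLetter) (bc : PLetter × PLetter) :
    List PLetter × List PLetter :=
  if bc.1.2 = bc.2.2 then uv else (toggleIn uv.1 bc.1, toggleIn uv.2 bc.2)

/-- Insert a letter into a decreasing primed word at the correct position. -/
def insertDecP (p : PLetter) : List PLetter → List PLetter
  | [] => [p]
  | q :: t => if pval q < pval p then p :: q :: t else q :: insertDecP p t

/-- The raising crystal operator acting on a consecutive pair of factors (primed version). -/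
def eStepP (u v : List PLetter) : Option (List PLetter × List PLetter) :=
  match unpairedSnd u v with
  | [] => none
  | x :: _ =>
    let q : ℕ := qUp (unprimeW u) x.1
    let toSwap := (pairsP u v).filter fun bc => decide (x.1 < bc.2.1 ∧ bc.2.1 ≤ x.1 + q)
    some (toSwap.foldl swapPairIn (insertDecP (x.1 + q, x.2) u, v.erase x))

/-- The lowering crystal operator acting on a consecutive pair of factors (primed version). -/
def fStepP (u v : List PLetter) : Option (List PLetter × List PLetter) :=
  match (unpairedFst u v).getLast? with
  | none => none
  | some y =>
    let q : ℕ := qDown (unprimeW v) y.1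
    let toSwap := (pairsP u v).filter fun bc => decide (y.1 - q ≤ bc.1.1 ∧ bc.1.1 < y.1)
    some (toSwap.foldl swapPairIn (u.erase y, insertDecP (y.1 - q, y.2) v))

/-- Apply a two-factor operator at position `(i, i+1)` of a factorization. -/
def applyAtP (g : List PLetter → List PLetter → Option (List PLetter × List PLetter))
    (i : ℕ) (a : ℕ → List PLetter) : Option (ℕ → List PLetter) :=
  (g (a i) (a (i + 1))).map fun uv =>
    Function.update (Function.update a i uv.1) (i + 1) uv.2

/-- The crystal operator `e` on primed factorizations acting on factors `i, i+1` (0-indexed). -/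
def eP (i : ℕ) (a : ℕ → List PLetter) : Option (ℕ → List PLetter) := applyAtP eStepP i a

/-- The crystal operator `f` on primed factorizations acting on factors `i, i+1` (0-indexed). -/
def fP (i : ℕ) (a : ℕ → List PLetter) : Option (ℕ → List PLetter) := applyAtP fStepP i a

/-! ### Crystal operators (unprimed version) -/

def findPairZ (c : ℤ) : List ℤ → Option ℤ × List ℤ
  | [] => (none, [])
  | b :: rest =>
      if b < c then (some b, rest)
      else
        let r := findPairZ c rest
        (r.1, b :: r.2)

def pairFoldZ (u : List ℤ) (vrev : List ℤ) : List (ℤ × ℤ) × List ℤ :=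
  vrev.foldl (fun st c =>
    match findPairZ c st.2 with
    | (none, r) => (st.1, r)
    | (some b, r) => ((b, c) :: st.1, r)) ([], u)

/-- The set `pair(u, v)` for integer words. -/
def pairsZ (u v : List ℤ) : List (ℤ × ℤ) := (pairFoldZ u v.reverse).1

def insertDecZ (x : ℤ) : List ℤ → List ℤ
  | [] => [x]
  | q :: t => if q < x then x :: q :: t else q :: insertDecZ x t

/-- The raising crystal operator on a consecutive pair of integer factors. -/
def eStepZ (u v : List ℤ) : Option (List ℤ × List ℤ) :=
  match v.filter (fun c => decide (c ∉ (pairsZ u v).map Prod.snd)) with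
  | [] => none
  | x :: _ =>
    let q : ℕ := qUp u x
    some (insertDecZ (x + q) u, v.erase x)

/-- The lowering crystal operator on a consecutive pair of integer factors. -/
def fStepZ (u v : List ℤ) : Option (List ℤ × List ℤ) :=
  match (u.filter (fun b => decide (b ∉ (pairsZ u v).map Prod.fst))).getLast? with
  | none => none
  | some y =>
    let q : ℕ := qDown v y
    some (u.erase y, insertDecZ (y - q) v)

def applyAtZ (g : List ℤ → List ℤ → Option (List ℤ × List ℤ))
    (i : ℕ) (a : ℕ → List ℤ) : Option (ℕ → List ℤ) :=
  (g (a i) (a (i + 1))).map fun uv =>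
    Function.update (Function.update a i uv.1) (i + 1) uv.2

/-- The crystal operator `e` acting on factors `i, i+1` (0-indexed) of an integer factorization,
so that `eZ i` is the paper's `e_{i+1}`. -/
def eZ (i : ℕ) (a : ℕ → List ℤ) : Option (ℕ → List ℤ) := applyAtZ eStepZ i a

/-- The crystal operator `f` acting on factors `i, i+1` (0-indexed). -/
def fZ (i : ℕ) (a : ℕ → List ℤ) : Option (ℕ → List ℤ) := applyAtZ fStepZ i a

/-! ### Coxeter–Knuth equivalence and tableaux -/

/-- One elementary Coxeter–Knuth move. -/
inductive CKStep : List ℤ → List ℤ → Prop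
  | acb (u v : List ℤ) {a b c : ℤ} (h1 : a < b) (h2 : b < c) :
      CKStep (u ++ a :: c :: b :: v) (u ++ c :: a :: b :: v)
  | bca (u v : List ℤ) {a b c : ℤ} (h1 : a < b) (h2 : b < c) :
      CKStep (u ++ b :: c :: a :: v) (u ++ b :: a :: c :: v)
  | braid (u v : List ℤ) {a b : ℤ} (h : b = a + 1 ∨ b = a - 1) :
      CKStep (u ++ a :: b :: a :: v) (u ++ b :: a :: b :: v)

/-- Coxeter–Knuth equivalence. -/
def CKEquiv : List ℤ → List ℤ → Prop := Relation.EqvGen CKStep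

/-- A tableau is recorded as its list of rows; its shape is the list of row lengths. -/
def shapeOf (T : List (List ℤ)) : List ℕ := T.map List.length

/-- The row reading word: rows left to right, starting with the last row. -/
def rowword (T : List (List ℤ)) : List ℤ := T.reverse.flatten

/-- The reverse row reading word. -/
def revrow (T : List (List ℤ)) : List ℤ := (rowword T).reverse

/-- The entry of `T` in row `i`, position `j` within the row (both 0-indexed). -/
def entryOf (T : List (List ℤ)) (i j : ℕ) : ℤ := (T.getD i []).getD j 0

/-- `T` has partition shape: rows nonempty with weakly decreasing lengths. -/
def IsPartShape (T : List (List ℤ)) : Prop :=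
  (∀ r ∈ T, r ≠ []) ∧ ∀ i, i + 1 < T.length → (T.getD (i + 1) []).length ≤ (T.getD i []).length

/-- An increasing tableau of partition shape. -/
def IncrTab (T : List (List ℤ)) : Prop :=
  IsPartShape T ∧ (∀ r ∈ T, r.Pairwise (· < ·)) ∧
  ∀ i j, i + 1 < T.length → j < (T.getD (i + 1) []).length → entryOf T i j < entryOf T (i + 1) j

/-- A decreasing tableau of partition shape. -/
def DecrTab (T : List (List ℤ)) : Prop :=
  IsPartShape T ∧ (∀ r ∈ T, r.Pairwise (fun x y => y < x)) ∧
  ∀ i j, i + 1 < T.length → j < (T.getD (i + 1) []).length → entryOf T (i + 1) j < entryOf T i j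

/-! ### Shifted tableaux -/

/-- Strict partition shape: rows nonempty with strictly decreasing lengths.  Row `i`
(0-indexed) of a shifted tableau occupies columns `i, i+1, …`. -/
def IsStrictShape (T : List (List ℤ)) : Prop :=
  (∀ r ∈ T, r ≠ []) ∧ ∀ i, i + 1 < T.length → (T.getD (i + 1) []).length < (T.getD i []).length

/-- An increasing shifted tableau: rows and columns strictly increase.  In row-list
coordinates, the entry of row `i+1` in within-row position `j` lies in the same column as the
entry of row `i` in within-row position `j+1`. -/
def ShIncrTab (T : List (List ℤ)) : Prop :=
  IsStrictShape T ∧ (∀ r ∈ T, r.Pairwise (· < ·)) ∧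
  ∀ i j, i + 1 < T.length → j < (T.getD (i + 1) []).length →
    entryOf T i (j + 1) < entryOf T (i + 1) j

/-- A decreasing shifted tableau. -/
def ShDecrTab (T : List (List ℤ)) : Prop :=
  IsStrictShape T ∧ (∀ r ∈ T, r.Pairwise (fun x y => y < x)) ∧
  ∀ i j, i + 1 < T.length → j < (T.getD (i + 1) []).length →
    entryOf T (i + 1) j < entryOf T i (j + 1)

/-! ### Young diagrams of partitions given as lists -/

/-- The Young diagram of a partition given as a list of row lengths (1-indexed positions). -/
def YDiagL (lam : List ℕ) : Set (ℤ × ℤ) :=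
  {p | 1 ≤ p.1 ∧ 1 ≤ p.2 ∧ p.2 ≤ (lam.getD (p.1 - 1).toNat 0 : ℤ)}

/-- The tableau `T_λ` with entry `i + j - 1` in each box `(i, j)` of `D_λ` (1-indexed). -/
def Tlam (lam : List ℕ) : List (List ℤ) :=
  lam.mapIdx fun i k => (List.range k).map fun j => ((i + j + 1 : ℕ) : ℤ)

/-! ### Fixed-point-free involutions -/

def fpfFun (i : ℤ) : ℤ := if Even i then i - 1 else i + 1

theorem fpfFun_involutive : Function.Involutive fpfFun := by
  intro i
  simp only [fpfFun, Int.even_iff]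
  split <;> split <;> omega

/-- The fixed-point-free involution `1_fpf : i ↦ i - (-1)^i`. -/
def onefpf : Equiv.Perm ℤ :=
  ⟨fpfFun, fpfFun, fpfFun_involutive, fpfFun_involutive⟩

/-- `I^fpf_ℤ`: the `S_ℤ`-conjugation orbit of `1_fpf`. -/
def IfpfZ : Set (Equiv.Perm ℤ) := {z | ∃ w ∈ SZSet, z = w⁻¹ * onefpf * w}

/-- `I^fpf_∞`: the `S_∞`-conjugation orbit of `1_fpf`. -/
def IfpfInfty : Set (Equiv.Perm ℤ) := {z | ∃ w ∈ SinftySet, z = w⁻¹ * onefpf * w}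

/-- `𝒜^Sp(z)`: minimal-length `w ∈ S_ℤ` with `z = w⁻¹ 1_fpf w`. -/
def ASp (z : Equiv.Perm ℤ) : Set (Equiv.Perm ℤ) :=
  {w | w ∈ SZSet ∧ z = w⁻¹ * onefpf * w ∧
       ∀ v ∈ SZSet, z = v⁻¹ * onefpf * v → lenOf w ≤ lenOf v}

/-- `R^Sp(z)`: the set of fpf-involution words for `z`. -/
def RSp (z : Equiv.Perm ℤ) : Set (List ℤ) := {l | ∃ w ∈ ASp z, IsReducedWord w l}

/-- The fpf-involution code `c^Sp_i(z)`. -/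
noncomputable def cSp (z : Equiv.Perm ℤ) (i : ℤ) : ℕ :=
  {j : ℤ | i < j ∧ z j < min i (z i)}.ncard

/-- `RF^Sp_n(z)`: symplectic reduced factorizations into at most `n` decreasing factors. -/
def RFSp (n : ℕ) (z : Equiv.Perm ℤ) : Set (ℕ → List ℤ) :=
  {a | (∀ i, ZDec (a i)) ∧ (∀ m, n ≤ m → a m = []) ∧ concatZ a n ∈ RSp z}

/-- `BRF^Sp_n(z)`: the bounded (by the standard flag) symplectic reduced factorizations:
every letter `m` of the factor in (0-indexed) position `i` satisfies `m ≥ i + 1`. -/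
def BRFSp (n : ℕ) (z : Equiv.Perm ℤ) : Set (ℕ → List ℤ) :=
  {a | a ∈ RFSp n z ∧ ∀ m, ∀ x ∈ a m, (m : ℤ) + 1 ≤ x}

/-! ### Symplectic Coxeter–Knuth equivalence -/

/-- The extra symplectic relations, affecting the first two letters. -/
inductive SpExtra : List ℤ → List ℤ → Prop
  | down (a : ℤ) (t : List ℤ) : SpExtra (a :: (a - 1) :: t) (a :: (a + 1) :: t)
  | comm (a b : ℤ) (t : List ℤ) (h : a % 2 = b % 2) : SpExtra (a :: b :: t) (b :: a :: t)

/-- Symplectic Coxeter–Knuth equivalence. -/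
def SpCKEquiv : List ℤ → List ℤ → Prop :=
  Relation.EqvGen (fun x y => CKStep x y ∨ SpExtra x y)

/-- `half_<(λ)` for a partition given as a list: positive values among `λ_i - i`. -/
def halfLtL (lam : List ℕ) : List ℕ :=
  ((List.range lam.length).map fun k => ((lam.getD k 0 : ℤ) - (k + 1)).toNat).filter
    fun m => decide (0 < m)

/-- The shifted tableau `T^Sp_λ` of shape `half_<(λ)` with entry `i + j` in box `(i,j) ∈ SD_μ`. -/
def TSpTab (lam : List ℕ) : List (List ℤ) :=
  (halfLtL lam).mapIdx fun k m => (List.range m).map fun t => ((2 * (k + 1) + t : ℕ) : ℤ)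

/-- Symmetric partition (list version): the diagram is invariant under transposition. -/
def SymmPartL (lam : List ℕ) : Prop :=
  ∀ p : ℤ × ℤ, p ∈ YDiagL lam ↔ (p.2, p.1) ∈ YDiagL lam

/-- Skew-symmetric partition (list version). -/
def SkewSymmPartL (lam : List ℕ) : Prop :=
  SymmPartL lam ∧ ∀ i : ℤ, (i, i) ∈ YDiagL lam → (i + 1, i + 1) ∉ YDiagL lam →
    (¬ ∃ mu : List ℕ, mu.Pairwise (· ≥ ·) ∧ YDiagL mu = YDiagL lam ∪ {(i, i + 1)} ∧
        YDiagL mu ≠ YDiagL lam) ∧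
    (¬ ∃ mu : List ℕ, mu.Pairwise (· ≥ ·) ∧ YDiagL mu = YDiagL lam \ {(i, i + 1)} ∧
        YDiagL mu ≠ YDiagL lam)

/-! ### Demazure product, orthogonal involution words -/

/-- One step of the Demazure product: multiply by `s_i` on the left if this increases length. -/
noncomputable def demStep (i : ℤ) (x : Equiv.Perm ℤ) : Equiv.Perm ℤ :=
  if lenOf x < lenOf (sT i * x) then sT i * x else x

/-- The Demazure product of the letters of a word. -/
noncomputable def demWordProd (l : List ℤ) : Equiv.Perm ℤ := l.foldr demStep 1

/-- `𝒜^O(z)`: minimal-length `w` with `z = w⁻¹ ∘ w` (Demazure product). -/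
def AO (z : Equiv.Perm ℤ) : Set (Equiv.Perm ℤ) :=
  {w | (∃ l : List ℤ, IsReducedWord w l ∧ demWordProd (l.reverse ++ l) = z) ∧
       ∀ v : Equiv.Perm ℤ, (∃ l : List ℤ, IsReducedWord v l ∧ demWordProd (l.reverse ++ l) = z) →
         lenOf w ≤ lenOf v}

/-- `Cyc(z) = {(a, b) : a < b = z(a)}`. -/
def CycSet (z : Equiv.Perm ℤ) : Set (ℤ × ℤ) := {p | p.1 < p.2 ∧ z p.1 = p.2}

/-- `R^O(z)`: the set of primed involution words for `z`. -/
def RO (z : Equiv.Perm ℤ) : Set (List PLetter) :=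
  {l | ∃ A ⊆ CycSet z, ∃ w ∈ AO z, IsPrimedReducedWord w l ∧ markedSet l = A}

/-- The involution code `c^O_i(z)`. -/
noncomputable def cO (z : Equiv.Perm ℤ) (i : ℤ) : ℕ :=
  {j : ℤ | i < j ∧ z j ≤ min i (z i)}.ncard

/-- `RF^O_n(z)`: orthogonal (primed) reduced factorizations into at most `n` factors. -/
def RFO (n : ℕ) (z : Equiv.Perm ℤ) : Set (ℕ → List PLetter) :=
  {a | (∀ i, PDec (a i)) ∧ (∀ m, n ≤ m → a m = []) ∧ concatP a n ∈ RO z}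

/-- The unprimed image `uRF^O_n(z)` of `RF^O_n(z)`. -/
def uRFO (n : ℕ) (z : Equiv.Perm ℤ) : Set (ℕ → List ℤ) := unprimeF '' RFO n z

/-! ### Primed and orthogonal Coxeter–Knuth equivalence -/

/-- One elementary primed Coxeter–Knuth move. -/
inductive PCKStep : List PLetter → List PLetter → Prop
  | swapACB (u v : List PLetter) {A B C : PLetter} (h1 : A.1 < B.1) (h2 : B.1 < C.1) :
      PCKStep (u ++ A :: C :: B :: v) (u ++ C :: A :: B :: v)
  | swapBCA (u v : List PLetter) {A B C : PLetter} (h1 : A.1 < B.1) (h2 : B.1 < C.1) :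
      PCKStep (u ++ B :: C :: A :: v) (u ++ B :: A :: C :: v)
  | braid00 (u v : List PLetter) {a b : ℤ} (h : b = a + 1 ∨ b = a - 1) :
      PCKStep (u ++ (a, false) :: (b, false) :: (a, false) :: v)
              (u ++ (b, false) :: (a, false) :: (b, false) :: v)
  | braid11 (u v : List PLetter) {a b : ℤ} (h : b = a + 1 ∨ b = a - 1) :
      PCKStep (u ++ (a, true) :: (b, true) :: (a, true) :: v)
              (u ++ (b, true) :: (a, true) :: (b, true) :: v)
  | mixA (u v : List PLetter) {a b : ℤ} (h : b = a + 1 ∨ b = a - 1) :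
      PCKStep (u ++ (a, true) :: (b, false) :: (a, false) :: v)
              (u ++ (b, false) :: (a, false) :: (b, true) :: v)
  | mixB (u v : List PLetter) {a b : ℤ} (h : b = a + 1 ∨ b = a - 1) :
      PCKStep (u ++ (a, false) :: (b, true) :: (a, false) :: v)
              (u ++ (b, false) :: (a, true) :: (b, false) :: v)
  | mixC (u v : List PLetter) {a b : ℤ} (h : b = a + 1 ∨ b = a - 1) :
      PCKStep (u ++ (a, true) :: (b, true) :: (a, false) :: v)
              (u ++ (b, false) :: (a, true) :: (b, true) :: v)
  | mixD (u v : List PLetter) {a b : ℤ} (h : b = a + 1 ∨ b = a - 1) :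
      PCKStep (u ++ (a, true) :: (b, false) :: (a, true) :: v)
              (u ++ (b, true) :: (a, false) :: (b, true) :: v)

/-- The extra orthogonal relations, affecting the first letters of words. -/
inductive OExtra : List PLetter → List PLetter → Prop
  | prime (a : ℤ) (w : List PLetter) : OExtra ((a, false) :: w) ((a, true) :: w)
  | comm00 (a b : ℤ) (w : List PLetter) :
      OExtra ((a, false) :: (b, false) :: w) ((b, false) :: (a, false) :: w)
  | comm01 (a b : ℤ) (w : List PLetter) :
      OExtra ((a, false) :: (b, true) :: w) ((b, false) :: (a, true) :: w)
  | comm10 (a b : ℤ) (w : List PLetter) :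
      OExtra ((a, true) :: (b, false) :: w) ((b, true) :: (a, false) :: w)
  | comm11 (a b : ℤ) (w : List PLetter) :
      OExtra ((a, true) :: (b, true) :: w) ((b, true) :: (a, true) :: w)

/-- Orthogonal Coxeter–Knuth equivalence. -/
def OCKEquiv : List PLetter → List PLetter → Prop :=
  Relation.EqvGen (fun x y => PCKStep x y ∨ OExtra x y)

/-- Increasing shifted tableau with primed entries: removing the primes yields an increasing
shifted tableau. -/
def ShIncrTabP (T : List (List PLetter)) : Prop := ShIncrTab (T.map unprimeW)

/-- Decreasing shifted tableau with primed entries. -/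
def ShDecrTabP (T : List (List PLetter)) : Prop := ShDecrTab (T.map unprimeW)

/-- No primed entries on the main diagonal (the first entry of each row). -/
def DiagUnprimed (T : List (List PLetter)) : Prop :=
  ∀ r ∈ T, ∀ p : PLetter, r.head? = some p → p.2 = false

/-- The row reading word of a primed shifted tableau. -/
def rowwordP (T : List (List PLetter)) : List PLetter := T.reverse.flatten

/-- The shape of a primed tableau. -/
def shapeOfP (T : List (List PLetter)) : List ℕ := T.map List.length

/-! ### Iterated partial operators -/

def iterOpt {α : Type*} (g : α → Option α) : ℕ → α → Option α
  | 0, a => some a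
  | m + 1, a => (g a).bind (iterOpt g m)

/-! ### Weak compositions as functions `ℤ → ℕ` supported on positive integers -/

/-- A weak composition: nonnegative entries indexed by positive integers, finitely supported. -/
def WeakCompF (α : ℤ → ℕ) : Prop :=
  (∀ i ≤ 0, α i = 0) ∧ ∃ N : ℤ, ∀ i, N ≤ i → α i = 0

/-- A partition: a weakly decreasing weak composition. -/
def IsPartitionFun (lam : ℤ → ℕ) : Prop :=
  WeakCompF lam ∧ ∀ i : ℤ, 1 ≤ i → lam (i + 1) ≤ lam i

/-- `lam` is the decreasing rearrangement `λ(α)` of `α`: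
it is a partition with the same part multiplicities. -/
def IsDecRearr (α lam : ℤ → ℕ) : Prop :=
  IsPartitionFun lam ∧ ∀ k : ℕ, 0 < k →
    {i : ℤ | 1 ≤ i ∧ k ≤ α i}.ncard = {i : ℤ | 1 ≤ i ∧ k ≤ lam i}.ncard

/-- The Young diagram of a partition function (1-indexed positions). -/
def YDiag (lam : ℤ → ℕ) : Set (ℤ × ℤ) :=
  {p | 1 ≤ p.1 ∧ 1 ≤ p.2 ∧ p.2 ≤ (lam p.1 : ℤ)}

/-- Symmetric partition: diagram invariant under transposition. -/
def SymmPartF (lam : ℤ → ℕ) : Prop :=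
  IsPartitionFun lam ∧ ∀ p : ℤ × ℤ, p ∈ YDiag lam ↔ (p.2, p.1) ∈ YDiag lam

/-- Skew-symmetric partition. -/
def SkewSymmPartF (lam : ℤ → ℕ) : Prop :=
  SymmPartF lam ∧ ∀ i : ℤ, (i, i) ∈ YDiag lam → (i + 1, i + 1) ∉ YDiag lam →
    (¬ ∃ mu : ℤ → ℕ, IsPartitionFun mu ∧ YDiag mu = YDiag lam ∪ {(i, i + 1)} ∧
        YDiag mu ≠ YDiag lam) ∧
    (¬ ∃ mu : ℤ → ℕ, IsPartitionFun mu ∧ YDiag mu = YDiag lam \ {(i, i + 1)} ∧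
        YDiag mu ≠ YDiag lam)

/-- The Demazure action of a simple transposition on weak compositions:
sort the entries in positions `i, i+1` into weakly increasing order. -/
def sComp (i : ℤ) (β : ℤ → ℕ) : ℤ → ℕ :=
  if β (i + 1) < β i then
    (fun j => if j = i then β (i + 1) else if j = i + 1 then β i else β j)
  else β

/-- The Demazure action of a word on a weak composition (rightmost letter acts first). -/
def demCompAct (l : List ℤ) (β : ℤ → ℕ) : ℤ → ℕ := l.foldr sComp β

/-- `u = u(α)`: the minimal-length permutation with `α = u ∘ λ(α)` under the Demazure action. -/
def IsUofAlpha (α lam : ℤ → ℕ) (u : Equiv.Perm ℤ) : Prop :=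
  u ∈ SinftySet ∧ (∃ l : List ℤ, IsReducedWord u l ∧ demCompAct l lam = α) ∧
  ∀ v ∈ SinftySet, (∃ l : List ℤ, IsReducedWord v l ∧ demCompAct l lam = α) → lenOf u ≤ lenOf v

/-! ### Isobaric divided differences, Schubert polynomials -/

/-- `g = π_i f`, i.e. `(x_i - x_{i+1}) g = x_i f - x_{i+1} (s_i f)`. -/
def IsPiApply (i : ℤ) (f g : MvPolynomial ℤ ℤ) : Prop :=
  (X i - X (i + 1)) * g = X i * f - X (i + 1) * MvPolynomial.rename (sT i) f

/-- `g = π_{i_1} π_{i_2} ⋯ π_{i_k} f` for the word `l = [i_1, …, i_k]`. -/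
inductive IsPiWord : List ℤ → MvPolynomial ℤ ℤ → MvPolynomial ℤ ℤ → Prop
  | nil (f : MvPolynomial ℤ ℤ) : IsPiWord [] f f
  | cons (i : ℤ) (t : List ℤ) (f h g : MvPolynomial ℤ ℤ) :
      IsPiWord t f h → IsPiApply i h g → IsPiWord (i :: t) f g

/-- The dominant monomial `x^λ = ∏_{k=1}^{M} x_k^{λ_k}`. -/
noncomputable def xpow (lam : ℤ → ℕ) (M : ℕ) : MvPolynomial ℤ ℤ :=
  ∏ k ∈ Finset.range M, (X ((k : ℤ) + 1) : MvPolynomial ℤ ℤ) ^ lam ((k : ℤ) + 1)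

/-- The defining axioms of the family of Schubert polynomials `{𝔖_w}_{w ∈ S_∞}`:
`𝔖_w = x^λ` for `w` dominant of shape `λ`, and
`∂_i 𝔖_w = 𝔖_{w s_i}` whenever `w(i) > w(i+1)` (cleared of denominators). -/
def IsSchubertFamily (Sf : Equiv.Perm ℤ → MvPolynomial ℤ ℤ) : Prop :=
  (∀ w ∈ SinftySet, ∀ lam : ℤ → ℕ, IsPartitionFun lam → RotheD w = YDiag lam →
     ∀ M : ℕ, (∀ i : ℤ, (M : ℤ) < i → lam i = 0) → Sf w = xpow lam M) ∧
  (∀ w ∈ SinftySet, ∀ i : ℤ, 1 ≤ i → w (i + 1) < w i →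
     (X i - X (i + 1)) * Sf (w * sT i) = Sf w - MvPolynomial.rename (sT i) (Sf w))

/-- Substituting `x_m = 0` for all `m > n` in a polynomial. -/
noncomputable def restrictVars (n : ℕ) (g : MvPolynomial ℤ ℤ) : MvPolynomial ℤ ℤ :=
  (MvPolynomial.aeval fun m : ℤ => if m ≤ (n : ℤ) then (X m : MvPolynomial ℤ ℤ) else 0) g

/-! ### Queer crystal operators `ē_1`, `f̄_1`, `σ_i` on symplectic factorizations -/

/-- Insert a letter directly after the first letter of a list. -/
def insertAfterFirst (c : ℤ) : List ℤ → List ℤ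
  | [] => [c]
  | x :: t => x :: c :: t

/-- The operator `ē_1` on symplectic reduced factorizations. -/
def e1barOp (a : ℕ → List ℤ) : Option (ℕ → List ℤ) :=
  match a 1 with
  | [] => none
  | y :: s =>
    if ∀ x ∈ a 0, x < y then
      if Even y then
        some (Function.update (Function.update a 1 s) 0 (y :: a 0))
      else
        some (Function.update (Function.update a 1 s) 0 (insertAfterFirst (y - 2) (a 0)))
    else none

/-- The operator `f̄_1` on symplectic reduced factorizations. -/
def f1barOp (a : ℕ → List ℤ) : Option (ℕ → List ℤ) :=
  match a 0 with
  | [] => none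
  | x :: _ =>
    if ∀ y ∈ a 1, y < x then
      if (x - 1) ∈ a 0 then
        some (Function.update (Function.update a 0 ((a 0).erase (x - 1))) 1 ((x + 1) :: a 1))
      else
        some (Function.update (Function.update a 0 ((a 0).erase x)) 1 (x :: a 1))
    else none

/-- The string-reversing operator `σ` acting on factors `i, i+1` (0-indexed):
apply `f^k` where `k = wt_i - wt_{i+1}` if `k ≥ 0`, and `e^{-k}` otherwise. -/
def sigZ (i : ℕ) (a : ℕ → List ℤ) : Option (ℕ → List ℤ) :=
  if (a (i + 1)).length ≤ (a i).length then
    iterOpt (fZ i) ((a i).length - (a (i + 1)).length) a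
  else
    iterOpt (eZ i) ((a (i + 1)).length - (a i).length) a

/-- The operators `ē_{j+1}` (0-indexed `j`), defined by
`ē_i = σ_{i-1} σ_i ē_{i-1} σ_i σ_{i-1}`. -/
def ebarOp : ℕ → (ℕ → List ℤ) → Option (ℕ → List ℤ)
  | 0 => e1barOp
  | j + 1 => fun a =>
      (sigZ j a).bind fun b => (sigZ (j + 1) b).bind fun c =>
        (ebarOp j c).bind fun d => (sigZ (j + 1) d).bind (sigZ j)

/-- The operators `f̄_{j+1}` (0-indexed `j`). -/
def fbarOp : ℕ → (ℕ → List ℤ) → Option (ℕ → List ℤ)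
  | 0 => f1barOp
  | j + 1 => fun a =>
      (sigZ j a).bind fun b => (sigZ (j + 1) b).bind fun c =>
        (fbarOp j c).bind fun d => (sigZ (j + 1) d).bind (sigZ j)

/-! ### Crystal Demazure operators on symplectic factorizations -/

/-- The crystal Demazure operator `𝔇_i` (paper-indexed `i ∈ [n-1]`) inside the ambient
crystal `RF^Sp_n(z)`:  all `b` with `e_i^m(b) ∈ X` for some `m ∈ ℕ`. -/
def DOpSp (n : ℕ) (z : Equiv.Perm ℤ) (i : ℤ) (Xs : Set (ℕ → List ℤ)) : Set (ℕ → List ℤ) :=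
  {b | b ∈ RFSp n z ∧ ∃ m : ℕ, ∃ b', iterOpt (eZ (i - 1).toNat) m b = some b' ∧ b' ∈ Xs}

/-- `𝔇_{i_1} 𝔇_{i_2} ⋯ 𝔇_{i_k} X` for the word `l = [i_1, …, i_k]`. -/
def DemFoldSp (n : ℕ) (z : Equiv.Perm ℤ) (l : List ℤ) (Xs : Set (ℕ → List ℤ)) :
    Set (ℕ → List ℤ) :=
  l.foldr (fun i Y => DOpSp n z i Y) Xs
lemma Equiv.Perm.inv_apply_self (e : Equiv.Perm ℤ) (x : ℤ) : e⁻¹ (e x) = x := by simp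

lemma Equiv.Perm.apply_inv_self (e : Equiv.Perm ℤ) (x : ℤ) : e (e⁻¹ x) = x := by simp

lemma sT_apply (i x : ℤ) : sT i x = if x = i then i + 1 else if x = i + 1 then i else x := by
  simp [sT, Equiv.swap_apply_def]

lemma sT_mul_self (i : ℤ) : sT i * sT i = 1 := Equiv.swap_mul_self _ _

lemma sT_inv (i : ℤ) : (sT i)⁻¹ = sT i := by
  simp [sT]

lemma wordProd_nil : wordProd [] = 1 := rfl
lemma wordProd_cons (c : ℤ) (t : List ℤ) : wordProd (c :: t) = sT c * wordProd t := by
  simp [wordProd]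
lemma wordProd_append (u v : List ℤ) : wordProd (u ++ v) = wordProd u * wordProd v := by
  simp [wordProd]
lemma wordProd_singleton (c : ℤ) : wordProd [c] = sT c := by simp [wordProd]

lemma wordProd_reverse (l : List ℤ) : wordProd l.reverse = (wordProd l)⁻¹ := by
  induction l with
  | nil => simp [wordProd]
  | cons c t ih =>
    rw [List.reverse_cons, wordProd_append, ih, wordProd_singleton, wordProd_cons,
      mul_inv_rev, sT_inv]

lemma wordProd_fix {l : List ℤ} {x : ℤ} (h : ∀ i ∈ l, x ≠ i ∧ x ≠ i + 1) :
    wordProd l x = x := by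
  induction l with
  | nil => simp [wordProd]
  | cons c t ih =>
    rw [wordProd_cons, Equiv.Perm.mul_apply, ih fun i hi => h i (List.mem_cons_of_mem _ hi)]
    have := h c (List.mem_cons_self)
    rw [sT_apply]
    simp only [this.1, this.2, if_false]

/-- points above all letters are fixed -/
lemma wordProd_fix_high {l : List ℤ} {c x : ℤ} (hl : ∀ i ∈ l, i < c) (hx : c < x) :
    wordProd l x = x :=
  wordProd_fix fun i hi => by have := hl i hi; omega

lemma wordProd_le {l : List ℤ} {c x : ℤ} (hl : ∀ i ∈ l, i < c) (hx : x ≤ c) :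
    wordProd l x ≤ c := by
  by_contra hgt
  push_neg at hgt
  have h2 : wordProd l (wordProd l x) = wordProd l x := wordProd_fix_high hl hgt
  have := (wordProd l).injective h2
  omega

lemma moved_finite (l : List ℤ) : {x : ℤ | wordProd l x ≠ x}.Finite := by
  induction l with
  | nil => simp [wordProd]
  | cons c t ih =>
    apply Set.Finite.subset (ih.insert c |>.insert (c+1))
    intro x hx
    simp only [Set.mem_setOf_eq, wordProd_cons, Equiv.Perm.mul_apply] at hx
    simp only [Set.mem_insert_iff, Set.mem_setOf_eq]
    by_contra hcon
    push_neg at hcon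
    obtain ⟨h1, h2, h3⟩ := hcon
    rw [h3] at hx
    rw [sT_apply] at hx
    simp only [h2, h1, if_false] at hx
    exact hx rfl

/-- the "fiber" of inversions with second coordinate b -/
def fib (w : Equiv.Perm ℤ) (b : ℤ) : Set ℤ := {a | a < b ∧ w b < w a}

lemma mem_fib {w : Equiv.Perm ℤ} {a b : ℤ} : a ∈ fib w b ↔ a < b ∧ w b < w a := Iff.rfl

lemma fib_finite (l : List ℤ) (b : ℤ) : (fib (wordProd l) b).Finite := by
  set w := wordProd l
  apply Set.Finite.subset ((moved_finite l).union (Set.finite_Ioo (w b) b))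
  intro a ⟨hab, hwab⟩
  by_cases hm : w a = a
  · right; constructor <;> omega
  · left; exact hm

lemma InvSet_finite (l : List ℤ) : (InvSet (wordProd l)).Finite := by
  set w := wordProd l with hw
  set K : Set ℤ := {x | w x ≠ x} ∪ (⋃ x ∈ {x | w x ≠ x}, Set.Ioo (w x) x) ∪
      (⋃ x ∈ {x | w x ≠ x}, Set.Ioo x (w x)) with hK
  have hKfin : K.Finite := by
    have hm := moved_finite l
    exact ((hm.union (hm.biUnion fun x _ => Set.finite_Ioo _ _)).union
      (hm.biUnion fun x _ => Set.finite_Ioo _ _))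
  apply Set.Finite.subset (hKfin.prod hKfin)
  rintro ⟨a, b⟩ hmem
  obtain ⟨hab, hwab⟩ : a < b ∧ w b < w a := hmem
  simp only [Set.mem_prod]
  have hamem : a ∈ K := by
    by_cases ha : w a = a
    · have hb : w b ≠ b := by omega
      left; right
      exact Set.mem_biUnion hb ⟨by omega, by omega⟩
    · left; left; exact ha
  have hbmem : b ∈ K := by
    by_cases hb : w b = b
    · have ha : w a ≠ a := by omega
      right
      exact Set.mem_biUnion ha ⟨by omega, by omega⟩
    · left; left; exact hb
  exact ⟨hamem, hbmem⟩



lemma qUp_not_mem (L : List ℤ) (x : ℤ) : x + (qUp L x : ℤ) ∉ L := Nat.find_spec (exists_add_not_mem L x)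
lemma qUp_mem {L : List ℤ} {x : ℤ} {j : ℕ} (h : j < qUp L x) : x + (j : ℤ) ∈ L := by
  have := Nat.find_min (exists_add_not_mem L x) h
  simpa using this
lemma qUp_mem' {L : List ℤ} {x y : ℤ} (h1 : x ≤ y) (h2 : y < x + (qUp L x : ℤ)) : y ∈ L := by
  have : y = x + ((y - x).toNat : ℤ) := by omega
  rw [this]; exact qUp_mem (by omega)
lemma qUp_eq {L : List ℤ} {x : ℤ} {q : ℕ} (h1 : x + (q:ℤ) ∉ L) (h2 : ∀ j : ℕ, j < q → x + (j:ℤ) ∈ L) :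
    qUp L x = q := by
  refine le_antisymm (Nat.find_le h1) ?_
  by_contra h
  push_neg at h
  exact qUp_not_mem L x (h2 _ h)
lemma qUp_pos {L : List ℤ} {x : ℤ} (h : x ∈ L) : 1 ≤ qUp L x := by
  by_contra hc
  push_neg at hc
  interval_cases h' : qUp L x
  · have := qUp_not_mem L x; rw [h'] at this; simp at this; exact this h

lemma qDown_not_mem (L : List ℤ) (x : ℤ) : x - (qDown L x : ℤ) ∉ L := Nat.find_spec (exists_sub_not_mem L x)
lemma qDown_mem {L : List ℤ} {x : ℤ} {j : ℕ} (h : j < qDown L x) : x - (j : ℤ) ∈ L := by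
  have := Nat.find_min (exists_sub_not_mem L x) h
  simpa using this
lemma qDown_mem' {L : List ℤ} {x y : ℤ} (h1 : y ≤ x) (h2 : x - (qDown L x : ℤ) < y) : y ∈ L := by
  have : y = x - ((x - y).toNat : ℤ) := by omega
  rw [this]; exact qDown_mem (by omega)
lemma qDown_pos {L : List ℤ} {x : ℤ} (h : x ∈ L) : 1 ≤ qDown L x := by
  by_contra hc
  push_neg at hc
  interval_cases h' : qDown L x
  · have := qDown_not_mem L x; rw [h'] at this; simp at this; exact this h

lemma ZDec_cons {c : ℤ} {t : List ℤ} (h : ZDec (c :: t)) : (∀ i ∈ t, i < c) ∧ ZDec t := by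
  rw [ZDec, List.pairwise_cons] at h; exact h

lemma dec_apply {d : List ℤ} (hd : ZDec d) : ∀ x : ℤ,
    wordProd d x = if x - 1 ∈ d then x - 1 else if x ∈ d then x + (qUp d x : ℤ) else x := by
  induction d with
  | nil => intro x; simp [wordProd]
  | cons c t ih =>
    obtain ⟨hbd, ht⟩ := ZDec_cons hd
    have iht := ih ht
    intro x
    rw [wordProd_cons, Equiv.Perm.mul_apply, iht x]
    by_cases h1 : x - 1 = c
    · have hx1t : x - 1 ∉ t := fun h => by have := hbd _ h; omega
      have hxt : x ∉ t := fun h => by have := hbd _ h; omega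
      rw [if_neg hx1t, if_neg hxt, if_pos (by simp [h1]), sT_apply]
      split_ifs <;> omega
    · by_cases h2 : x - 1 ∈ t
      · have hlt := hbd _ h2
        rw [if_pos h2, if_pos (by simp [h2]), sT_apply]
        simp only [show x - 1 ≠ c by omega, if_false, show x - 1 ≠ c + 1 by omega, if_false]
      · have hnm : x - 1 ∉ c :: t := by simp [h1, h2]
        rw [if_neg h2, if_neg hnm]
        by_cases h3 : x = c
        · have hxt : x ∉ t := fun h => by have := hbd _ h; omega
          rw [if_neg hxt, sT_apply, if_pos h3, if_pos (by simp [h3])]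
          have : qUp (c :: t) x = 1 := by
            apply qUp_eq
            · simp only [List.mem_cons, not_or]
              exact ⟨by omega, fun h => by have := hbd _ h; omega⟩
            · intro j hj
              interval_cases j
              simp [h3]
          rw [this]
          push_cast
          omega
        · by_cases h4 : x ∈ t
          · have hxc := hbd _ h4
            rw [if_pos h4, if_pos (by simp [h4])]
            set q := qUp t x with hq
            have hq1 : 1 ≤ q := qUp_pos h4
            have hqn : x + (q:ℤ) ∉ t := qUp_not_mem t x
            have hqtop : x + (q:ℤ) - 1 ∈ t := by
              have h5 := qUp_mem (L := t) (x := x) (j := q - 1) (by omega)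
              rwa [show x + ((q - 1 : ℕ) : ℤ) = x + (q:ℤ) - 1 by omega] at h5
            have hqc : x + (q:ℤ) ≤ c := by have := hbd _ hqtop; omega
            by_cases h5 : x + (q:ℤ) = c
            · have : qUp (c :: t) x = q + 1 := by
                apply qUp_eq
                · simp only [List.mem_cons, not_or]
                  refine ⟨by omega, fun h => by have := hbd _ h; omega⟩
                · intro j hj
                  rcases Nat.lt_or_ge j q with hj2 | hj2
                  · exact List.mem_cons_of_mem _ (qUp_mem hj2)
                  · have : j = q := by omega
                    subst this
                    simp [h5]
              rw [this, sT_apply, if_pos h5]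
              push_cast
              omega
            · have : qUp (c :: t) x = q := by
                apply qUp_eq
                · simp only [List.mem_cons, not_or]
                  exact ⟨by omega, hqn⟩
                · intro j hj
                  exact List.mem_cons_of_mem _ (qUp_mem hj)
              rw [this, sT_apply]
              simp only [show x + (q:ℤ) ≠ c by omega, if_false,
                show x + (q:ℤ) ≠ c + 1 by omega, if_false]
          · rw [if_neg h4, if_neg (by simp [h3, h4]), sT_apply]
            simp only [h3, if_false, show x ≠ c + 1 by omega, if_false]


lemma fib_dec_mem {d : List ℤ} {b : ℤ} (hd : ZDec d) (hb : b - 1 ∈ d) :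
    fib (wordProd d) b = {b - (qDown d (b-1) : ℤ)} := by
  have hq1 : 1 ≤ qDown d (b-1) := qDown_pos hb
  have hqn : b - 1 - (qDown d (b-1) : ℤ) ∉ d := qDown_not_mem d (b-1)
  set qd := qDown d (b - 1) with hqd
  have hvb : wordProd d b = b - 1 := by rw [dec_apply hd b, if_pos hb]
  ext a
  simp only [fib, Set.mem_setOf_eq, Set.mem_singleton_iff, hvb]
  constructor
  · rintro ⟨hab, hv⟩
    rw [dec_apply hd a] at hv
    by_cases h1 : a - 1 ∈ d
    · rw [if_pos h1] at hv; omega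
    · by_cases h2 : a ∈ d
      · rw [if_neg h1, if_pos h2] at hv
        have hun := qUp_not_mem d a
        by_cases h3 : a < b - (qd:ℤ)
        · exact absurd (qUp_mem' (by omega : a ≤ b - 1 - (qd:ℤ)) (by omega)) hqn
        · by_cases h4 : b - (qd:ℤ) < a
          · exact absurd (qDown_mem' (x := b-1) (by omega) (by omega)) h1
          · omega
      · rw [if_neg h1, if_neg h2] at hv; omega
  · intro ha
    subst ha
    refine ⟨by omega, ?_⟩
    have h1 : b - (qd:ℤ) - 1 ∉ d := by rwa [show b - (qd:ℤ) - 1 = b - 1 - (qd:ℤ) by ring]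
    have h2 : b - (qd:ℤ) ∈ d := qDown_mem' (x := b - 1) (by omega) (by omega)
    rw [dec_apply hd (b - (qd:ℤ)), if_neg h1, if_pos h2]
    by_contra hc
    push_neg at hc
    exact absurd (qDown_mem' (x := b - 1)
      (by omega : b - (qd:ℤ) + (qUp d (b - (qd:ℤ)) : ℤ) ≤ b - 1) (by omega))
      (qUp_not_mem d (b - (qd:ℤ)))

lemma fib_dec_empty {d : List ℤ} {b : ℤ} (hd : ZDec d) (hb : b - 1 ∉ d) :
    fib (wordProd d) b = ∅ := by
  ext a
  simp only [fib, Set.mem_setOf_eq, Set.mem_empty_iff_false, iff_false, not_and]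
  intro hab
  rw [dec_apply hd a, dec_apply hd b, if_neg hb]
  by_cases h1 : a - 1 ∈ d
  · rw [if_pos h1]
    split_ifs with h2 <;> intro hc
    · have := qUp_pos h2
      omega
    · omega
  · by_cases h2 : a ∈ d
    · rw [if_neg h1, if_pos h2]
      by_cases h3 : b ∈ d
      · rw [if_pos h3]
        intro hc
        exact absurd (qUp_mem' (x := a) (by omega : a ≤ b + (qUp d b : ℤ)) (by omega))
          (qUp_not_mem d b)
      · rw [if_neg h3]
        intro hc
        exact absurd (qUp_mem' (x := a) (by omega) (by omega)) h3
    · rw [if_neg h1, if_neg h2]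
      split_ifs with h3 <;> intro hc
      · have := qUp_pos h3
        omega
      · omega

lemma fib_dec_card {d : List ℤ} (hd : ZDec d) (b : ℤ) : (fib (wordProd d) b).ncard ≤ 1 := by
  by_cases hb : b - 1 ∈ d
  · rw [fib_dec_mem hd hb, Set.ncard_singleton]
  · rw [fib_dec_empty hd hb]; simp



lemma sm_ge {w : Equiv.Perm ℤ} (hsm : ∀ a b : ℤ, a < b → w a < w b) (y : ℤ) :
    ∀ k : ℕ, w y + (k:ℤ) ≤ w (y + (k:ℤ)) := by
  intro k
  induction k with
  | zero => simp
  | succ k ih =>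
    have h1 := hsm (y + (k:ℤ)) (y + (k:ℤ) + 1) (by omega)
    rw [show y + ((k+1:ℕ):ℤ) = y + (k:ℤ) + 1 by push_cast; ring]
    push_cast
    omega

lemma eq_one_of_no_inv {l : List ℤ} (h : InvSet (wordProd l) = ∅) : wordProd l = 1 := by
  set w := wordProd l with hw
  have hsm : ∀ a b : ℤ, a < b → w a < w b := by
    intro a b hab
    have h1 : (a, b) ∉ InvSet w := by rw [h]; exact Set.notMem_empty _
    simp only [InvSet, Set.mem_setOf_eq, not_and] at h1
    have h2 := h1 hab
    have h3 : w a ≠ w b := fun he => by have := w.injective he; omega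
    omega
  obtain ⟨ub, hub⟩ := (moved_finite l).bddAbove
  obtain ⟨lb, hlb⟩ := (moved_finite l).bddBelow
  have hfixhi : ∀ x : ℤ, ub < x → w x = x := by
    intro x hx
    by_contra hc
    exact absurd (hub hc) (by omega)
  have hfixlo : ∀ x : ℤ, x < lb → w x = x := by
    intro x hx
    by_contra hc
    exact absurd (hlb hc) (by omega)
  have key : ∀ x : ℤ, w x = x := by
    intro x
    have hge : x ≤ w x := by
      set y := min x lb - 1 with hy
      have hfy : w y = y := hfixlo y (by omega)
      have := sm_ge hsm y (x - y).toNat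
      rw [show y + ((x - y).toNat : ℤ) = x by omega] at this
      omega
    have hle : w x ≤ x := by
      set z := max x ub + 1 with hz
      have hfz : w z = z := hfixhi z (by omega)
      have := sm_ge hsm x (z - x).toNat
      rw [show x + ((z - x).toNat : ℤ) = z by omega] at this
      omega
    omega
  ext x
  simp [key x]

def invAt (l : List ℤ) (j : ℕ) : ℤ × ℤ :=
  (wordProd ((l.drop (j+1)).reverse) (l.getD j 0),
   wordProd ((l.drop (j+1)).reverse) (l.getD j 0 + 1))

lemma invAt_cons (c : ℤ) (t : List ℤ) (j : ℕ) : invAt (c :: t) (j+1) = invAt t j := rfl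

lemma InvSet_one : InvSet (1 : Equiv.Perm ℤ) = ∅ := by
  ext p
  simp only [InvSet, Set.mem_setOf_eq, Set.mem_empty_iff_false, iff_false, not_and,
    Equiv.Perm.one_apply]
  omega

lemma invAt_surj : ∀ {l : List ℤ} {p : ℤ × ℤ}, p ∈ InvSet (wordProd l) →
    ∃ j, j < l.length ∧ p = invAt l j := by
  intro l
  induction l with
  | nil =>
    intro p hp
    rw [show wordProd [] = 1 from rfl, InvSet_one] at hp
    exact absurd hp (Set.notMem_empty _)
  | cons c t ih =>
    intro p hp
    obtain ⟨h1, h2⟩ : p.1 < p.2 ∧ (wordProd (c :: t)) p.2 < (wordProd (c :: t)) p.1 := hp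
    rw [wordProd_cons, Equiv.Perm.mul_apply, Equiv.Perm.mul_apply] at h2
    set u := wordProd t with hu
    by_cases hcase : u p.2 < u p.1
    · obtain ⟨j, hj, he⟩ := ih ⟨h1, hcase⟩
      exact ⟨j + 1, by simpa using Nat.succ_lt_succ hj, by rw [he, invAt_cons]⟩
    · have hne : u p.1 ≠ u p.2 := fun he => by have := u.injective he; omega
      have hlt : u p.1 < u p.2 := by omega
      have hkey : u p.1 = c ∧ u p.2 = c + 1 := by
        rw [sT_apply, sT_apply] at h2
        split_ifs at h2 <;> omega
      refine ⟨0, by simp, ?_⟩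
      have hrev : wordProd (t.reverse) = u⁻¹ := wordProd_reverse t
      have e1 : p.1 = u⁻¹ c := by rw [← hkey.1]; simp
      have e2 : p.2 = u⁻¹ (c + 1) := by rw [← hkey.2]; simp
      rw [invAt]
      simp only [List.drop_succ_cons, List.drop_zero, List.getD_cons_zero, hrev]
      exact Prod.ext e1 e2

lemma card_inv_le_length (l : List ℤ) : (InvSet (wordProd l)).ncard ≤ l.length := by
  have hsub : InvSet (wordProd l) ⊆ (fun j => invAt l j) '' (Set.Iio l.length) := by
    intro p hp
    obtain ⟨j, hj, he⟩ := invAt_surj hp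
    exact ⟨j, hj, he.symm⟩
  have hIio : (Set.Iio l.length) = ↑(Finset.range l.length) := by ext j; simp
  calc (InvSet (wordProd l)).ncard
      ≤ ((fun j => invAt l j) '' (Set.Iio l.length)).ncard :=
        Set.ncard_le_ncard hsub (((Set.finite_Iio _).image _))
    _ ≤ (Set.Iio l.length).ncard := Set.ncard_image_le (Set.finite_Iio _)
    _ = l.length := by rw [hIio, Set.ncard_coe_finset, Finset.card_range]



lemma mem_invSet_iff_fib {w : Equiv.Perm ℤ} {p : ℤ × ℤ} : p ∈ InvSet w ↔ p.1 ∈ fib w p.2 :=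
  Iff.rfl

section Peel

variable {l d : List ℤ} (hd : ZDec d)
    (hmem : ∀ x : ℤ, x ∈ d ↔ (fib (wordProd l) (x+1)).Nonempty)

/-- β : the distinguished inversion of the peeled factor is an inversion of w. -/
lemma rho_mem_fib (hd : ZDec d)
    (hmem : ∀ x : ℤ, x ∈ d ↔ (fib (wordProd l) (x+1)).Nonempty)
    {b : ℤ} (hb : b - 1 ∈ d) :
    b - (qDown d (b-1) : ℤ) ∈ fib (wordProd l) b := by
  set w := wordProd l with hw
  set qd := qDown d (b-1) with hqd
  have hq1 : 1 ≤ qd := qDown_pos hb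
  set a := b - (qd:ℤ) with ha
  have ha1 : a - 1 ∉ d := by
    rw [show a - 1 = b - 1 - (qd:ℤ) by omega]
    exact qDown_not_mem d (b-1)
  have hanb : ∀ x : ℤ, x < a → w x < w a := by
    intro x hx
    have : ¬ (fib w (a - 1 + 1)).Nonempty := fun hne => (ha1 ((hmem _).mpr hne))
    rw [show a - 1 + 1 = a by ring] at this
    have hx2 : x ∉ fib w a := fun hf => this ⟨x, hf⟩
    simp only [fib, Set.mem_setOf_eq, not_and, not_lt] at hx2
    have := hx2 hx
    have hne : w x ≠ w a := fun he => by have := w.injective he; omega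
    omega
  have key : ∀ j : ℕ, a + 1 + (j:ℤ) ≤ b → w (a + 1 + (j:ℤ)) < w a := by
    intro j
    induction j using Nat.strong_induction_on with
    | _ j ih =>
      intro hjb
      have hjd : a + (j:ℤ) ∈ d := by
        apply qDown_mem' (x := b - 1) (by omega) (by omega)
      have hjB : (fib w (a + (j:ℤ) + 1)).Nonempty := by
        have := (hmem (a + (j:ℤ))).mp hjd
        rwa [show a + (j:ℤ) + 1 = a + (j:ℤ) + 1 from rfl]
      obtain ⟨x, hx1, hx2⟩ := hjB
      rcases lt_trichotomy x a with hxa | hxa | hxa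
      · have := hanb x hxa
        rw [show a + 1 + (j:ℤ) = a + (j:ℤ) + 1 by ring]
        omega
      · subst hxa
        rw [show a + 1 + (j:ℤ) = a + (j:ℤ) + 1 by ring]
        omega
      · have hj' : (x - a - 1).toNat < j := by omega
        have := ih (x - a - 1).toNat hj' (by omega)
        rw [show a + 1 + ((x - a - 1).toNat : ℤ) = x by omega] at this
        rw [show a + 1 + (j:ℤ) = a + (j:ℤ) + 1 by ring]
        omega
  have hfin := key (b - a - 1).toNat (by omega)
  rw [show a + 1 + ((b - a - 1).toNat : ℤ) = b by omega] at hfin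
  exact ⟨by omega, hfin⟩

lemma fib_sub (hd : ZDec d)
    (hmem : ∀ x : ℤ, x ∈ d ↔ (fib (wordProd l) (x+1)).Nonempty) (b : ℤ) :
    fib (wordProd d) b ⊆ fib (wordProd l) b := by
  by_cases hb : b - 1 ∈ d
  · rw [fib_dec_mem hd hb]
    intro a ha
    rw [Set.mem_singleton_iff] at ha
    subst ha
    exact rho_mem_fib hd hmem hb
  · rw [fib_dec_empty hd hb]
    exact Set.empty_subset _

lemma invSet_sub (hd : ZDec d)
    (hmem : ∀ x : ℤ, x ∈ d ↔ (fib (wordProd l) (x+1)).Nonempty) :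
    InvSet (wordProd d) ⊆ InvSet (wordProd l) := by
  intro p hp
  exact fib_sub hd hmem p.2 hp

/-- fibers of the quotient permutation. -/
lemma fib_peel (hd : ZDec d)
    (hmem : ∀ x : ℤ, x ∈ d ↔ (fib (wordProd l) (x+1)).Nonempty) (b : ℤ) :
    fib (wordProd (l ++ d.reverse)) (wordProd d b) =
      (wordProd d) '' (fib (wordProd l) b \ fib (wordProd d) b) := by
  have hw' : wordProd (l ++ d.reverse) = wordProd l * (wordProd d)⁻¹ := by
    rw [wordProd_append, wordProd_reverse]
  rw [hw']
  ext a'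
  simp only [fib, Set.mem_setOf_eq, Set.mem_image, Set.mem_diff]
  constructor
  · rintro ⟨h1, h2⟩
    simp only [Equiv.Perm.mul_apply, Equiv.Perm.inv_apply_self] at h2
    refine ⟨(wordProd d)⁻¹ a', ⟨⟨?_, h2⟩, ?_⟩, by simp⟩
    · by_contra hge
      push_neg at hge
      have hne : (wordProd d)⁻¹ a' ≠ b := by
        intro he
        have : wordProd d ((wordProd d)⁻¹ a') = wordProd d b := congrArg _ he
        simp only [Equiv.Perm.apply_inv_self] at this
        omega
      have hbf : b ∈ fib (wordProd d) ((wordProd d)⁻¹ a') := by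
        refine ⟨by omega, by simpa using h1⟩
      have h3 := fib_sub hd hmem ((wordProd d)⁻¹ a') hbf
      simp only [fib, Set.mem_setOf_eq] at h3
      omega
    · simp only [fib, Set.mem_setOf_eq, not_and, not_lt]
      intro _
      simp only [Equiv.Perm.apply_inv_self]
      omega
  · rintro ⟨a, ⟨⟨hab, hwf⟩, hnf⟩, rfl⟩
    simp only [fib, Set.mem_setOf_eq, not_and, not_lt] at hnf
    have h4 := hnf hab
    have hne : wordProd d a ≠ wordProd d b := fun he => by
      have := (wordProd d).injective he; omega
    refine ⟨by omega, ?_⟩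
    simp only [Equiv.Perm.mul_apply, Equiv.Perm.inv_apply_self]
    exact hwf

lemma fib_peel_card (hd : ZDec d)
    (hmem : ∀ x : ℤ, x ∈ d ↔ (fib (wordProd l) (x+1)).Nonempty)
    {n : ℕ} (hm : ∀ b, (fib (wordProd l) b).ncard ≤ n + 1) (c : ℤ) :
    (fib (wordProd (l ++ d.reverse)) c).ncard ≤ n := by
  have hc : c = wordProd d ((wordProd d)⁻¹ c) := by simp
  rw [hc, fib_peel hd hmem ((wordProd d)⁻¹ c),
    Set.ncard_image_of_injective _ (wordProd d).injective]
  by_cases hbd : (wordProd d)⁻¹ c - 1 ∈ d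
  · have hrho := rho_mem_fib hd hmem hbd
    rw [Set.ncard_diff (fib_sub hd hmem ((wordProd d)⁻¹ c)) (fib_finite d _)]
    have h1 : (fib (wordProd d) ((wordProd d)⁻¹ c)).ncard = 1 := by
      rw [fib_dec_mem hd hbd]; simp
    have h2 : 0 < (fib (wordProd l) ((wordProd d)⁻¹ c)).ncard :=
      (Set.ncard_pos (fib_finite l _)).mpr ⟨_, hrho⟩
    have := hm ((wordProd d)⁻¹ c)
    omega
  · have hfw : fib (wordProd l) ((wordProd d)⁻¹ c) = ∅ := by
      by_contra hne
      rw [← Ne, ← Set.nonempty_iff_ne_empty] at hne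
      exact hbd ((hmem _).mpr (by rwa [show (wordProd d)⁻¹ c - 1 + 1 = (wordProd d)⁻¹ c by ring]))
    rw [hfw]
    simp

lemma invSet_peel (hd : ZDec d)
    (hmem : ∀ x : ℤ, x ∈ d ↔ (fib (wordProd l) (x+1)).Nonempty) :
    InvSet (wordProd (l ++ d.reverse)) =
      Prod.map (wordProd d) (wordProd d) '' (InvSet (wordProd l) \ InvSet (wordProd d)) := by
  have hw' : wordProd (l ++ d.reverse) = wordProd l * (wordProd d)⁻¹ := by
    rw [wordProd_append, wordProd_reverse]
  rw [hw']
  ext ⟨a', b'⟩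
  simp only [InvSet, Set.mem_setOf_eq, Set.mem_image, Set.mem_diff, Prod.exists, Prod.map,
    Prod.mk.injEq]
  constructor
  · rintro ⟨h1, h2⟩
    simp only [Equiv.Perm.mul_apply] at h2
    refine ⟨(wordProd d)⁻¹ a', (wordProd d)⁻¹ b', ⟨⟨?_, h2⟩, ?_⟩, by simp, by simp⟩
    · by_contra hge
      push_neg at hge
      have hne : (wordProd d)⁻¹ a' ≠ (wordProd d)⁻¹ b' := by
        intro he
        have := congrArg (wordProd d) he
        simp only [Equiv.Perm.apply_inv_self] at this
        omega
      have hbf : ((wordProd d)⁻¹ b', (wordProd d)⁻¹ a') ∈ InvSet (wordProd d) := by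
        refine ⟨by omega, by simpa using h1⟩
      have h3 := invSet_sub hd hmem hbf
      have h5 : wordProd l ((wordProd d)⁻¹ a') < wordProd l ((wordProd d)⁻¹ b') := h3.2
      omega
    · simp only [InvSet, Set.mem_setOf_eq, not_and, not_lt]
      intro _
      simp only [Equiv.Perm.apply_inv_self]
      omega
  · rintro ⟨a, b, ⟨⟨hab, hwf⟩, hnf⟩, rfl, rfl⟩
    simp only [InvSet, Set.mem_setOf_eq, not_and, not_lt] at hnf
    have h4 := hnf hab
    have hne : wordProd d a ≠ wordProd d b := fun he => by
      have := (wordProd d).injective he; omega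
    refine ⟨by omega, ?_⟩
    simp only [Equiv.Perm.mul_apply, Equiv.Perm.inv_apply_self]
    exact hwf

lemma invSet_dec_eq (hd : ZDec d) :
    InvSet (wordProd d) =
      (fun b => (b - (qDown d (b-1) : ℤ), b)) '' {b : ℤ | b - 1 ∈ d} := by
  ext ⟨a, b⟩
  simp only [Set.mem_image, Set.mem_setOf_eq, Prod.mk.injEq]
  constructor
  · intro hp
    have hf : a ∈ fib (wordProd d) b := hp
    by_cases hbd : b - 1 ∈ d
    · rw [fib_dec_mem hd hbd, Set.mem_singleton_iff] at hf
      exact ⟨b, hbd, hf.symm, rfl⟩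
    · rw [fib_dec_empty hd hbd] at hf
      exact absurd hf (Set.notMem_empty _)
  · rintro ⟨b', hb', rfl, rfl⟩
    have : b' - (qDown d (b'-1) : ℤ) ∈ fib (wordProd d) b' := by
      rw [fib_dec_mem hd hb']
      simp
    exact this

lemma ZDec_nodup (hd : ZDec d) : d.Nodup := by
  exact List.Pairwise.imp (fun h => by omega) (show d.Pairwise (fun x y => y < x) from hd)

lemma invSet_dec_card (hd : ZDec d) : (InvSet (wordProd d)).ncard = d.length := by
  rw [invSet_dec_eq hd]
  rw [Set.ncard_image_of_injOn (fun x _ y _ h => by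
    simpa using congrArg Prod.snd h)]
  have h1 : {b : ℤ | b - 1 ∈ d} = (fun x => x + 1) '' {x : ℤ | x ∈ d} := by
    ext y
    simp only [Set.mem_setOf_eq, Set.mem_image]
    constructor
    · intro h; exact ⟨y - 1, h, by ring⟩
    · rintro ⟨x, hx, rfl⟩; simpa using hx
  rw [h1, Set.ncard_image_of_injective _ (fun x y h => by omega)]
  have h2 : {x : ℤ | x ∈ d} = ↑d.toFinset := by ext x; simp
  rw [h2, Set.ncard_coe_finset, List.toFinset_card_of_nodup (ZDec_nodup hd)]

lemma invSet_peel_card (hd : ZDec d)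
    (hmem : ∀ x : ℤ, x ∈ d ↔ (fib (wordProd l) (x+1)).Nonempty) :
    (InvSet (wordProd (l ++ d.reverse))).ncard + d.length = (InvSet (wordProd l)).ncard := by
  rw [invSet_peel hd hmem, Set.ncard_image_of_injective _
    (Prod.map_injective.mpr ⟨(wordProd d).injective, (wordProd d).injective⟩),
    ← invSet_dec_card hd]
  exact Set.ncard_diff_add_ncard_of_subset (invSet_sub hd hmem) (InvSet_finite l)

end Peel



lemma concatZ_succ (a : ℕ → List ℤ) (n : ℕ) : concatZ a (n+1) = concatZ a n ++ a n := by
  simp [concatZ, List.range_succ]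

lemma exists_dlist (l : List ℤ) : ∃ d : List ℤ, ZDec d ∧
    ∀ x : ℤ, x ∈ d ↔ (fib (wordProd l) (x+1)).Nonempty := by
  have hSfin : {x : ℤ | (fib (wordProd l) (x+1)).Nonempty}.Finite := by
    apply Set.Finite.subset (((InvSet_finite l).image Prod.snd).image (fun b => b - 1))
    rintro x ⟨a, ha⟩
    exact ⟨x + 1, ⟨(a, x+1), ha, rfl⟩, by ring⟩
  refine ⟨(hSfin.toFinset.sort (· ≤ ·)).reverse, ?_, ?_⟩
  · rw [ZDec, List.pairwise_reverse]
    exact List.sortedLT_iff_pairwise.mp (Finset.sortedLT_sort _)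
  · intro x
    rw [List.mem_reverse, Finset.mem_sort, Set.Finite.mem_toFinset]
    rfl

lemma invSet_empty_of_fib (l : List ℤ) (h : ∀ b, (fib (wordProd l) b).ncard = 0) :
    InvSet (wordProd l) = ∅ := by
  ext ⟨a, b⟩
  simp only [Set.mem_empty_iff_false, iff_false]
  intro hp
  have h1 : a ∈ fib (wordProd l) b := hp
  have h2 : 0 < (fib (wordProd l) b).ncard := (Set.ncard_pos (fib_finite l b)).mpr ⟨a, h1⟩
  have := h b
  omega

lemma exists_fact : ∀ n : ℕ, ∀ l : List ℤ, (∀ b, (fib (wordProd l) b).ncard ≤ n) →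
    ∃ a : ℕ → List ℤ, (∀ k, ZDec (a k)) ∧ (∀ k, n ≤ k → a k = []) ∧
      wordProd (concatZ a n) = wordProd l ∧
      (concatZ a n).length = (InvSet (wordProd l)).ncard := by
  intro n
  induction n with
  | zero =>
    intro l hm
    have h1 : InvSet (wordProd l) = ∅ :=
      invSet_empty_of_fib l (fun b => Nat.le_zero.mp (hm b))
    refine ⟨fun _ => [], fun k => List.Pairwise.nil, fun k _ => rfl, ?_, ?_⟩
    · rw [show concatZ (fun _ => []) 0 = [] from rfl, eq_one_of_no_inv h1]
      rfl
    · rw [h1]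
      simp [concatZ]
  | succ n ih =>
    intro l hm
    obtain ⟨d, hd, hdmem⟩ := exists_dlist l
    obtain ⟨a', ha'dec, ha'nil, ha'prod, ha'len⟩ :=
      ih (l ++ d.reverse) (fib_peel_card hd hdmem hm)
    refine ⟨fun k => if k = n then d else a' k, ?_, ?_, ?_, ?_⟩
    · intro k
      by_cases hk : k = n
      · simpa [hk] using hd
      · simpa [hk] using ha'dec k
    · intro k hk
      have : k ≠ n := by omega
      simpa [this] using ha'nil k (by omega)
    · have hc : concatZ (fun k => if k = n then d else a' k) (n+1) = concatZ a' n ++ d := by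
        rw [concatZ_succ]
        simp only [if_pos rfl]
        congr 1
        unfold concatZ
        congr 1
        apply List.map_congr_left
        intro k hk
        rw [List.mem_range] at hk
        simp [Nat.ne_of_lt hk]
      rw [hc, wordProd_append, ha'prod, wordProd_append, wordProd_reverse]
      group
    · have hc : concatZ (fun k => if k = n then d else a' k) (n+1) = concatZ a' n ++ d := by
        rw [concatZ_succ]
        simp only [if_pos rfl]
        congr 1
        unfold concatZ
        congr 1
        apply List.map_congr_left
        intro k hk
        rw [List.mem_range] at hk
        simp [Nat.ne_of_lt hk]
      rw [hc, List.length_append, ha'len]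
      exact invSet_peel_card hd hdmem



noncomputable def markF (A : Set (ℤ × ℤ)) : Equiv.Perm ℤ → ℤ → Bool :=
  fun τ c => @decide _ (Classical.propDecidable ((τ⁻¹ c, τ⁻¹ (c+1)) ∈ A))

lemma markF_iff {A : Set (ℤ × ℤ)} {τ : Equiv.Perm ℤ} {c : ℤ} :
    markF A τ c = true ↔ (τ⁻¹ c, τ⁻¹ (c+1)) ∈ A := by
  unfold markF
  exact @decide_eq_true_iff _ (Classical.propDecidable _)

def pwc (mk : Equiv.Perm ℤ → ℤ → Bool) : List ℤ → Equiv.Perm ℤ → List PLetter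
  | [], _ => []
  | c :: t, σ => (c, mk (wordProd t * σ) c) :: pwc mk t σ

lemma pwc_unprime (mk) (l : List ℤ) (σ) : unprimeW (pwc mk l σ) = l := by
  induction l with
  | nil => rfl
  | cons c t ih => simp [pwc, unprimeW] at ih ⊢; exact ih

lemma pwc_length (mk) (l : List ℤ) (σ) : (pwc mk l σ).length = l.length := by
  induction l with
  | nil => rfl
  | cons c t ih => simp [pwc, ih]

lemma pwc_append (mk) (x y : List ℤ) (σ) :
    pwc mk (x ++ y) σ = pwc mk x (wordProd y * σ) ++ pwc mk y σ := by
  induction x with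
  | nil => rfl
  | cons c t ih =>
    simp only [List.cons_append, pwc]
    rw [ih, wordProd_append, mul_assoc]

lemma pwc_drop (mk) (l : List ℤ) (σ) (k : ℕ) :
    (pwc mk l σ).drop k = pwc mk (l.drop k) σ := by
  induction l generalizing k with
  | nil => simp [pwc]
  | cons c t ih =>
    cases k with
    | zero => rfl
    | succ k => simp only [pwc, List.drop_succ_cons, ih]

lemma pwc_pdec (mk) {x : List ℤ} (hx : ZDec x) (σ) : PDec (pwc mk x σ) := by
  have h1 : (pwc mk x σ).Pairwise (fun p q : PLetter => q.1 < p.1) := by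
    rw [show (pwc mk x σ) = (pwc mk x σ) from rfl]
    have := pwc_unprime mk x σ
    rw [← this] at hx
    unfold unprimeW ZDec at hx
    exact List.pairwise_map.mp hx
  unfold PDec
  apply List.Pairwise.imp _ h1
  intro p q h
  unfold pval
  split_ifs <;> omega

lemma pwc_get (mk) (l : List ℤ) (σ) (j : ℕ) (h : j < (pwc mk l σ).length) :
    (pwc mk l σ).get ⟨j, h⟩ =
      (l.getD j 0, mk (wordProd (l.drop (j+1)) * σ) (l.getD j 0)) := by
  induction l generalizing j with
  | nil => simp [pwc] at h
  | cons c t ih =>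
    cases j with
    | zero => rfl
    | succ j =>
      simp only [pwc, List.get_cons_succ, List.getD_cons_succ, List.drop_succ_cons]
      exact ih j _

lemma marked_pwc (A : Set (ℤ × ℤ)) (l : List ℤ) :
    markedSet (pwc (markF A) l 1) =
      {p | ∃ j, j < l.length ∧ invAt l j ∈ A ∧ p = invAt l j} := by
  have hlen := pwc_length (markF A) l 1
  ext p
  simp only [markedSet, Set.mem_setOf_eq]
  constructor
  · rintro ⟨⟨j, hj⟩, hmk, h1, h2⟩
    rw [pwc_get] at hmk h1 h2
    rw [pwc_drop, List.map_reverse] at h1 h2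
    rw [show (List.map Prod.fst (pwc (markF A) (l.drop (j+1)) 1)) = l.drop (j+1) from
      pwc_unprime _ _ _] at h1 h2
    simp only at hmk h1 h2
    rw [markF_iff] at hmk
    have hinv : (wordProd (l.drop (j + 1)) * 1)⁻¹ = wordProd ((l.drop (j+1)).reverse) := by
      rw [mul_one, wordProd_reverse]
    rw [hinv] at hmk
    refine ⟨j, by omega, hmk, ?_⟩
    rw [invAt]
    exact Prod.ext h1 h2
  · rintro ⟨j, hj, hA, rfl⟩
    refine ⟨⟨j, by omega⟩, ?_, ?_, ?_⟩
    · rw [pwc_get]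
      simp only
      rw [markF_iff]
      have hinv : (wordProd (l.drop (j + 1)) * 1)⁻¹ = wordProd ((l.drop (j+1)).reverse) := by
        rw [mul_one, wordProd_reverse]
      rw [hinv]
      exact hA
    · rw [pwc_get, pwc_drop, List.map_reverse]
      rw [show (List.map Prod.fst (pwc (markF A) (l.drop (j+1)) 1)) = l.drop (j+1) from
        pwc_unprime _ _ _]
      rfl
    · rw [pwc_get, pwc_drop, List.map_reverse]
      rw [show (List.map Prod.fst (pwc (markF A) (l.drop (j+1)) 1)) = l.drop (j+1) from
        pwc_unprime _ _ _]
      rfl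

def PF (mk : Equiv.Perm ℤ → ℤ → Bool) : List (List ℤ) → Equiv.Perm ℤ → List (List PLetter)
  | [], _ => []
  | x :: R, σ => pwc mk x (wordProd R.flatten * σ) :: PF mk R σ

lemma PF_length (mk) (R : List (List ℤ)) (σ) : (PF mk R σ).length = R.length := by
  induction R with
  | nil => rfl
  | cons x R ih => simp [PF, ih]

lemma PF_flatten (mk) (R : List (List ℤ)) (σ) :
    (PF mk R σ).flatten = pwc mk R.flatten σ := by
  induction R with
  | nil => rfl
  | cons x R ih =>
    simp only [PF, List.flatten_cons, ih, pwc_append]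

lemma PF_mem (mk) (R : List (List ℤ)) (σ) {x : List PLetter} (hx : x ∈ PF mk R σ) :
    ∃ y σ', y ∈ R ∧ x = pwc mk y σ' := by
  induction R with
  | nil => simp [PF] at hx
  | cons z R ih =>
    rcases List.mem_cons.mp hx with h | h
    · exact ⟨z, _, List.mem_cons_self, h⟩
    · obtain ⟨y, σ', hy, he⟩ := ih h
      exact ⟨y, σ', List.mem_cons_of_mem _ hy, he⟩

lemma map_getD_range {α : Type*} (L : List α) (d : α) :
    (List.range L.length).map (fun k => L.getD k d) = L := by
  apply List.ext_getElem
  · simp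
  · intro i h1 h2
    simp only [List.getElem_map, List.getElem_range]
    rw [List.getD_eq_getElem]



lemma fib_mul_le (u v : Equiv.Perm ℤ) (b : ℤ) :
    fib (u * v) b ⊆ (fun x => v⁻¹ x) '' (fib u (v b)) ∪ fib v b := by
  intro a ⟨hab, hw⟩
  simp only [Equiv.Perm.mul_apply] at hw
  by_cases hv : v b < v a
  · right; exact ⟨hab, hv⟩
  · left
    have hne : v a ≠ v b := fun he => by rw [he] at hw; omega
    exact ⟨v a, ⟨by omega, hw⟩, by simp⟩

lemma fib_concat_le (az : ℕ → List ℤ) (hz : ∀ j, ZDec (az j)) :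
    ∀ k b, (fib (wordProd (concatZ az k)) b).ncard ≤ k := by
  intro k
  induction k with
  | zero =>
    intro b
    have : fib (wordProd (concatZ az 0)) b = ∅ := by
      ext a
      simp only [fib, Set.mem_setOf_eq, Set.mem_empty_iff_false, iff_false, not_and, not_lt]
      intro hab
      have : wordProd (concatZ az 0) = 1 := rfl
      rw [this]
      simpa using le_of_lt hab
    rw [this]
    simp
  | succ k ih =>
    intro b
    rw [concatZ_succ, wordProd_append]
    have hsub := fib_mul_le (wordProd (concatZ az k)) (wordProd (az k)) b
    have hfin : (((fun x => (wordProd (az k))⁻¹ x) '' fib (wordProd (concatZ az k))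
        ((wordProd (az k)) b)) ∪ fib (wordProd (az k)) b).Finite :=
      ((fib_finite _ _).image _).union (fib_finite _ _)
    calc (fib (wordProd (concatZ az k) * wordProd (az k)) b).ncard
        ≤ _ := Set.ncard_le_ncard hsub hfin
      _ ≤ ((fun x => (wordProd (az k))⁻¹ x) '' fib (wordProd (concatZ az k))
            ((wordProd (az k)) b)).ncard + (fib (wordProd (az k)) b).ncard :=
          Set.ncard_union_le _ _
      _ ≤ k + 1 := by
          have h1 := Set.ncard_image_of_injective
            (fib (wordProd (concatZ az k)) ((wordProd (az k)) b))
            (wordProd (az k))⁻¹.injective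
          rw [h1]
          exact Nat.add_le_add (ih _) (fib_dec_card (hz k) b)

lemma strict_of_weak {y : List ℤ} (hw : y.Pairwise (fun x z => z ≤ x))
    (hns : ∀ u : List ℤ, ∀ c : ℤ, ∀ v : List ℤ, y ≠ u ++ c :: c :: v) : ZDec y := by
  induction y with
  | nil => exact List.Pairwise.nil
  | cons c t ih =>
    rw [List.pairwise_cons] at hw
    have ht : ZDec t := by
      apply ih hw.2
      intro u c' v he
      exact hns (c :: u) c' v (by rw [he]; rfl)
    cases t with
    | nil => simp [ZDec]
    | cons b t' =>
      have hcb : b ≤ c := hw.1 b (List.mem_cons_self)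
      have hne : c ≠ b := by
        intro he
        exact hns [] c t' (by simp [he])
      rw [ZDec, List.pairwise_cons]
      refine ⟨?_, ht⟩
      intro x hx
      rcases List.mem_cons.mp hx with h | h
      · omega
      · have := (List.pairwise_cons.mp ht).1 x h
        omega

lemma exists_factor_split (az : ℕ → List ℤ) :
    ∀ n k, k < n → ∃ U V : List ℤ, concatZ az n = U ++ az k ++ V := by
  intro n
  induction n with
  | zero => intro k hk; omega
  | succ n ih =>
    intro k hk
    rcases Nat.lt_or_ge k n with h | h
    · obtain ⟨U, V, hUV⟩ := ih k h
      exact ⟨U, V ++ az n, by rw [concatZ_succ, hUV]; simp⟩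
    · have : k = n := by omega
      subst this
      exact ⟨concatZ az k, [], by rw [concatZ_succ]; simp⟩

lemma no_repeat_of_reduced {w : Equiv.Perm ℤ} {U V : List ℤ} {c : ℤ}
    (h : IsReducedWord w (U ++ c :: c :: V)) : False := by
  have hprod : wordProd (U ++ V) = w := by
    rw [← h.1, wordProd_append, wordProd_append, wordProd_cons, wordProd_cons,
      ← mul_assoc (sT c), sT_mul_self, one_mul]
  have := h.2 (U ++ V) hprod
  simp only [List.length_append, List.length_cons] at this
  omega

lemma code_eq_fib (w : Equiv.Perm ℤ) (b : ℤ) : codeOf w⁻¹ (w b) = (fib w b).ncard := by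
  have hset : {j : ℤ | w b < j ∧ w⁻¹ j < w⁻¹ (w b)} = w '' fib w b := by
    ext j
    simp only [Set.mem_setOf_eq, Set.mem_image, fib]
    constructor
    · rintro ⟨h1, h2⟩
      refine ⟨w⁻¹ j, ⟨by simpa using h2, by simpa using h1⟩, by simp⟩
    · rintro ⟨a, ⟨h1, h2⟩, rfl⟩
      refine ⟨h2, by simpa using h1⟩
  rw [codeOf]
  simp only [Equiv.Perm.inv_apply_self]
  rw [show {j : ℤ | w b < j ∧ w⁻¹ j < b} = w '' fib w b from by
    rw [← hset]; simp, Set.ncard_image_of_injective _ w.injective]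

/-- For `w ∈ S_ℤ`, `A ⊆ Inv(w)` and `n ≥ 1`, the set `RF⁺_n(w, A)` is
nonempty if and only if `c_i(w⁻¹) ≤ n` for every `i ∈ ℤ`. -/
theorem RFplusN_nonempty_iff (n : ℕ) (hn : 0 < n) (w : Equiv.Perm ℤ) (hw : w ∈ SZSet)
    (A : Set (ℤ × ℤ)) (hA : A ⊆ InvSet w) :
    (RFplusN n w A).Nonempty ↔ ∀ i : ℤ, codeOf w⁻¹ i ≤ n := by
  constructor
  · rintro ⟨a, hPD, hnil, hred, hmark⟩
    intro i
    have hconcat : unprimeW (concatP a n) = concatZ (fun k => unprimeW (a k)) n := by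
      unfold concatP concatZ unprimeW
      rw [List.map_flatten, List.map_map]
      rfl
    have hredl : IsReducedWord w (concatZ (fun k => unprimeW (a k)) n) := by
      rw [← hconcat]; exact hred
    have hzdec : ∀ k, ZDec (unprimeW (a k)) := by
      intro k
      rcases Nat.lt_or_ge k n with hk | hk
      · apply strict_of_weak
        · have h1 := hPD k
          unfold unprimeW
          rw [List.pairwise_map]
          apply List.Pairwise.imp _ h1
          intro p q h
          unfold pval at h
          split_ifs at h <;> omega
        · intro u c v he
          obtain ⟨U, V, hUV⟩ := exists_factor_split (fun k => unprimeW (a k)) n k hk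
          rw [he] at hUV
          have h2 : concatZ (fun k => unprimeW (a k)) n = (U ++ u) ++ c :: c :: (v ++ V) := by
            rw [hUV]; simp
          exact absurd (h2 ▸ hredl) (fun hr => no_repeat_of_reduced hr)
      · rw [hnil k hk]
        exact List.Pairwise.nil
    have hb := fib_concat_le (fun k => unprimeW (a k)) hzdec n (w⁻¹ i)
    rw [hredl.1] at hb
    have hc := code_eq_fib w (w⁻¹ i)
    rw [Equiv.Perm.apply_inv_self] at hc
    rw [hc]
    exact hb
  · intro hcode
    obtain ⟨l₀, hl₀⟩ := hw
    have hm : ∀ b, (fib (wordProd l₀) b).ncard ≤ n := by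
      intro b
      rw [hl₀, ← code_eq_fib w b]
      exact hcode (w b)
    obtain ⟨az, hazdec, haznil, hazprod, hazlen⟩ := exists_fact n l₀ hm
    have hprodw : wordProd (concatZ az n) = w := by rw [hazprod, hl₀]
    have hlen : (concatZ az n).length = (InvSet w).ncard := by rw [hazlen, hl₀]
    have hredl : IsReducedWord w (concatZ az n) := by
      refine ⟨hprodw, fun m hmw => ?_⟩
      rw [hlen, ← hmw]
      exact card_inv_le_length m
    have hPFlen : (PF (markF A) ((List.range n).map az) 1).length = n := by
      rw [PF_length, List.length_map, List.length_range]
    have hmap : (List.range n).map (fun k => (PF (markF A) ((List.range n).map az) 1).getD k [])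
        = PF (markF A) ((List.range n).map az) 1 := by
      have h0 := map_getD_range (PF (markF A) ((List.range n).map az) 1) ([] : List PLetter)
      rw [hPFlen] at h0
      exact h0
    have hconcatP : concatP (fun k => (PF (markF A) ((List.range n).map az) 1).getD k []) n
        = pwc (markF A) (concatZ az n) 1 := by
      unfold concatP
      rw [hmap, PF_flatten]
      rfl
    refine ⟨fun k => (PF (markF A) ((List.range n).map az) 1).getD k [], ?_, ?_, ?_, ?_⟩
    · intro k
      rcases Nat.lt_or_ge k n with hk | hk
      · have hk' : k < (PF (markF A) ((List.range n).map az) 1).length := by omega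
        have hget : (PF (markF A) ((List.range n).map az) 1).getD k []
            ∈ PF (markF A) ((List.range n).map az) 1 := by
          rw [List.getD_eq_getElem _ _ hk']
          exact List.getElem_mem hk'
        obtain ⟨y, σ', hy, he⟩ := PF_mem _ _ _ hget
        show PDec ((PF (markF A) ((List.range n).map az) 1).getD k [])
        rw [he]
        obtain ⟨k', _, hk'e⟩ := List.mem_map.mp hy
        exact pwc_pdec _ (hk'e ▸ hazdec k') _
      · show PDec ((PF (markF A) ((List.range n).map az) 1).getD k [])
        rw [List.getD_eq_default _ _ (by omega)]
        exact List.Pairwise.nil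
    · intro m hm'
      show (PF (markF A) ((List.range n).map az) 1).getD m [] = []
      exact List.getD_eq_default _ _ (by omega)
    · show IsReducedWord w (unprimeW _)
      rw [hconcatP, pwc_unprime]
      exact hredl
    · rw [hconcatP, marked_pwc]
      ext p
      simp only [Set.mem_setOf_eq]
      constructor
      · rintro ⟨j, hj, hmem, rfl⟩
        exact hmem
      · intro hp
        have hp2 : p ∈ InvSet (wordProd (concatZ az n)) := by
          rw [hprodw]
          exact hA hp
        obtain ⟨j, hj, he⟩ := invAt_surj hp2
        exact ⟨j, hj, he ▸ hp, he⟩
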